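/- Let k, m be positive integers, K a finite field of characteristic 2, V an F₂-vector space, and Φ : K^m → V an injective F₂-linear map. Let W be a finite set of vectors in K^m and c : W → {1,…,k} a coloring. Assume that every subset of W of size at most 3k is linearly independent over K. Then for every function x : W × (K \ {0}) → F₂ satisfying Σ_{(w,a)} x(w,a)·(e_{c(w)}, Φ(a·w)) = (1_k, 0) in F₂^k × V, the support of x has size at least 3k. -/
import Mathlib

theorem stmt5 (k m : ℕ) (hk : 0 < k) (hm : 0 < m)
    {K : Type*} [Field K] [Fintype K] [DecidableEq K] [CharP K 2] [Algebra (ZMod 2) K]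
    {V : Type*} [AddCommGroup V] [Module (ZMod 2) V]
    (Φ : (Fin m → K) →ₗ[ZMod 2] V) (hΦ : Function.Injective Φ)
    (W : Finset (Fin m → K)) (c : {w // w ∈ W} → Fin k)
    (hW : ∀ S : Finset (Fin m → K), S ⊆ W → S.card ≤ 3 * k →
      LinearIndependent K (fun v : S => (v : Fin m → K)))
    (x : {w // w ∈ W} × {a : K // a ≠ 0} → ZMod 2)
    (hx : ∑ p : {w // w ∈ W} × {a : K // a ≠ 0},
        x p • (((Pi.single (c p.1) 1 : Fin k → ZMod 2),
          Φ ((p.2 : K) • (p.1 : Fin m → K))) : (Fin k → ZMod 2) × V)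
        = (((fun _ => 1 : Fin k → ZMod 2), 0) : (Fin k → ZMod 2) × V)) :
    3 * k ≤ (Finset.univ.filter fun p => x p ≠ 0).card := by
  classical
  by_contra hcon
  push_neg at hcon
  set S : Finset ({w // w ∈ W} × {a : K // a ≠ 0}) :=
    Finset.univ.filter (fun p => x p ≠ 0) with hSdef
  have hone : ∀ z : ZMod 2, z ≠ 0 → z = 1 := by decide
  -- component equations
  have hfst := congrArg Prod.fst hx
  have hsnd := congrArg Prod.snd hx
  simp only [Prod.fst_sum, Prod.snd_sum, Prod.smul_fst, Prod.smul_snd] at hfst hsnd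
  -- second component
  have h2 : ∑ p : {w // w ∈ W} × {a : K // a ≠ 0},
      x p • ((p.2 : K) • (p.1 : Fin m → K)) = 0 := by
    apply hΦ
    rw [map_sum, map_zero]
    simpa only [map_smul] using hsnd
  have h3 : ∑ p ∈ S, ((p.2 : K) • (p.1 : Fin m → K)) = 0 := by
    rw [← h2]
    rw [← Finset.sum_subset (Finset.subset_univ S)
      (fun p _ hp => by
        have : x p = 0 := by
          by_contra hxp
          exact hp (Finset.mem_filter.mpr ⟨Finset.mem_univ p, hxp⟩)
        rw [this, zero_smul])]
    apply Finset.sum_congr rfl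
    intro p hp
    have hxp : x p ≠ 0 := (Finset.mem_filter.mp hp).2
    rw [hone _ hxp, one_smul]
  set W₀ : Finset (Fin m → K) := S.image (fun p => ((p.1 : {w // w ∈ W}) : Fin m → K))
    with hW₀def
  have hW₀W : W₀ ⊆ W := by
    intro w hw
    rcases Finset.mem_image.mp hw with ⟨p, _, rfl⟩
    exact p.1.2
  have hW₀card : W₀.card ≤ 3 * k :=
    le_trans Finset.card_image_le (le_of_lt hcon)
  have hli := hW W₀ hW₀W hW₀card
  rw [Fintype.linearIndependent_iff] at hli
  -- coefficients
  set g : (Fin m → K) → K :=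
    fun w => ∑ p ∈ S.filter (fun p => ((p.1 : {w // w ∈ W}) : Fin m → K) = w),
      (p.2 : K) with hgdef
  have hmaps : ∀ p ∈ S, ((p.1 : {w // w ∈ W}) : Fin m → K) ∈ W₀ :=
    fun p hp => Finset.mem_image_of_mem _ hp
  have h4 : ∑ w ∈ W₀, g w • w = 0 := by
    rw [← h3, ← Finset.sum_fiberwise_of_maps_to hmaps
      (fun p => ((p.2 : K) • (p.1 : Fin m → K)))]
    apply Finset.sum_congr rfl
    intro w hw
    rw [hgdef, Finset.sum_smul]
    apply Finset.sum_congr rfl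
    intro p hp
    rw [(Finset.mem_filter.mp hp).2]
  have h5 : ∀ w ∈ W₀, g w = 0 := by
    intro w hw
    have h4' : ∑ i : {v // v ∈ W₀}, g (i : Fin m → K) • (i : Fin m → K) = 0 := by
      rw [Finset.sum_coe_sort W₀ (fun w => g w • w)]
      exact h4
    exact hli (fun i => g (i : Fin m → K)) h4' ⟨w, hw⟩
  -- fibers have size ≥ 3
  have hfiber : ∀ w ∈ W₀,
      3 ≤ (S.filter (fun p => ((p.1 : {w // w ∈ W}) : Fin m → K) = w)).card := by
    intro w hw
    set F := S.filter (fun p => ((p.1 : {w // w ∈ W}) : Fin m → K) = w) with hFdef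
    have hne : F.Nonempty := by
      rcases Finset.mem_image.mp hw with ⟨p, hp, hpw⟩
      exact ⟨p, Finset.mem_filter.mpr ⟨hp, hpw⟩⟩
    have hsum : ∑ p ∈ F, (p.2 : K) = 0 := h5 w hw
    by_contra hlt
    push_neg at hlt
    interval_cases hF : F.card
    · exact absurd (Finset.card_eq_zero.mp hF ▸ hne) (by simp)
    · rcases Finset.card_eq_one.mp hF with ⟨p, hFp⟩
      rw [hFp, Finset.sum_singleton] at hsum
      exact p.2.2 hsum
    · rcases Finset.card_eq_two.mp hF with ⟨p, q, hpq, hFpq⟩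
      rw [hFpq, Finset.sum_insert (by simpa using hpq), Finset.sum_singleton] at hsum
      have haeq : (p.2 : K) = (q.2 : K) := by
        have := add_eq_zero_iff_eq_neg.mp hsum
        rwa [CharTwo.neg_eq] at this
      have hp2 : p.2 = q.2 := Subtype.ext haeq
      have hpF : p ∈ F := hFpq ▸ Finset.mem_insert_self p {q}
      have hqF : q ∈ F := hFpq ▸ Finset.mem_insert_of_mem (Finset.mem_singleton_self q)
      have hp1 : p.1 = q.1 := Subtype.ext (by
        rw [(Finset.mem_filter.mp hpF).2, (Finset.mem_filter.mp hqF).2])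
      exact hpq (Prod.ext hp1 hp2)
  -- every color appears
  have hcol : ∀ i : Fin k, ∃ p, p ∈ S ∧ c p.1 = i := by
    intro i
    by_contra h
    push_neg at h
    have hi := congrFun hfst i
    rw [Finset.sum_apply] at hi
    rw [Finset.sum_eq_zero] at hi
    · exact one_ne_zero hi.symm
    · intro p _
      by_cases hxp : x p = 0
      · simp [hxp]
      · have hpS : p ∈ S := Finset.mem_filter.mpr ⟨Finset.mem_univ p, hxp⟩
        have : c p.1 ≠ i := h p hpS
        simp [Pi.single_apply, Ne.symm this]
  choose f hf1 hf2 using hcol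
  have hkcard : k ≤ W₀.card := by
    have := Finset.card_le_card_of_injOn (s := (Finset.univ : Finset (Fin k)))
      (fun i => (((f i).1 : {w // w ∈ W}) : Fin m → K))
      (fun i _ => hmaps _ (hf1 i))
      (fun i _ j _ hij => by
        have h1 : (f i).1 = (f j).1 := Subtype.ext hij
        rw [← hf2 i, ← hf2 j, h1])
    simpa using this
  -- conclude
  have hcount : S.card = ∑ w ∈ W₀,
      (S.filter (fun p => ((p.1 : {w // w ∈ W}) : Fin m → K) = w)).card :=
    Finset.card_eq_sum_card_fiberwise hmaps
  have : 3 * k ≤ S.card := by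
    calc 3 * k ≤ 3 * W₀.card := by omega
    _ = ∑ _w ∈ W₀, 3 := by rw [Finset.sum_const, smul_eq_mul, mul_comm]
    _ ≤ ∑ w ∈ W₀,
        (S.filter (fun p => ((p.1 : {w // w ∈ W}) : Fin m → K) = w)).card :=
      Finset.sum_le_sum hfiber
    _ = S.card := hcount.symm
  omega
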